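/- Suppose Pr(γ(C_v) ≥ t | |C_v| = k) ≤ (3e⁵k³/m)^t and Pr(|C_v| ≥ k) ≤ β^k for a constant β ∈ (0,1). If m = Ω(log⁷ n) and t = O(log n), then Pr(γ(C_v) ≥ t) ≤ Σ_{k=1}^{∞} min((3e⁵k³/m)^t, 1)·β^k = m^{-Ω(t)} + n^{-ω(1)}, i.e., the component excess exceeds t with probability m^{-Ω(t)} plus a superpolynomially small (in n) term. -/
import Mathlib


open MeasureTheory
open scoped ENNReal

set_option maxHeartbeats 1000000 in
/-- if `Pr(γ(C_v) ≥ t ∧ |C_v| = k) ≤ (3e⁵k³/m)^t · Pr(|C_v| = k)` and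
`Pr(|C_v| ≥ k) ≤ β^k` for a constant `β ∈ (0,1)`, then — provided `m ≥ c₁ log⁷ n`
and `1 ≤ t ≤ c₂ log n` — we have
`Pr(γ(C_v) ≥ t) ≤ Σ_k min((3e⁵k³/m)^t, 1)·β^k ≤ m^{-Ω(t)} + n^{-ω(1)}`:
there is a constant `c₃ > 0` such that for every `d > 0` and all large enough `n`
the tail is at most `m^{-c₃ t} + n^{-d}`. -/
theorem component_excess_tail :
    ∀ (β c₁ c₂ : ℝ), 0 < β → β < 1 → 0 < c₁ → 0 < c₂ →
    ∃ c₃ : ℝ, 0 < c₃ ∧ ∀ d : ℝ, 0 < d → ∃ n₀ : ℕ, ∀ n : ℕ, n₀ ≤ n →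
    ∀ m t : ℕ, c₁ * (Real.log n) ^ 7 ≤ m → 1 ≤ t → (t : ℝ) ≤ c₂ * Real.log n →
    ∀ (Ω : Type) (_ : MeasurableSpace Ω) (ℙ : Measure Ω), IsProbabilityMeasure ℙ →
    ∀ G C : Ω → ℕ,
    (∀ k : ℕ, ℙ {ω | k ≤ C ω} ≤ ENNReal.ofReal (β ^ k)) →
    (∀ k : ℕ, ℙ ({ω | t ≤ G ω} ∩ {ω | C ω = k})
        ≤ ENNReal.ofReal ((3 * Real.exp 5 * (k : ℝ) ^ 3 / m) ^ t) * ℙ {ω | C ω = k}) →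
    ℙ {ω | t ≤ G ω}
        ≤ ENNReal.ofReal (∑' k : ℕ, min ((3 * Real.exp 5 * (k : ℝ) ^ 3 / m) ^ t) 1 * β ^ k) ∧
      (∑' k : ℕ, min ((3 * Real.exp 5 * (k : ℝ) ^ 3 / m) ^ t) 1 * β ^ k)
        ≤ (m : ℝ) ^ (-(c₃ * t)) + (n : ℝ) ^ (-d) := by
  intro β c₁ c₂ hβ0 hβ1 hc₁ hc₂
  refine ⟨1/28, by norm_num, ?_⟩
  intro d hd
  set b : ℝ := -Real.log β with hbdef
  have hlogβ : Real.log β < 0 := Real.log_neg hβ0 hβ1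
  have hbpos : 0 < b := by simp only [hbdef]; linarith
  have h1β : 0 < 1 - β := by linarith
  have hc14 : (0:ℝ) < c₁ ^ ((13:ℝ)/14) := Real.rpow_pos_of_pos hc₁ _
  have hc28 : (0:ℝ) < c₁ ^ ((1:ℝ)/28) := Real.rpow_pos_of_pos hc₁ _
  set L₀ : ℝ := max (max 2 (1/c₁ + 1))
      (max ((24 * Real.exp 5 / c₁ ^ ((13:ℝ)/14))^2)
        (max ((1/((1-β) * c₁ ^ ((1:ℝ)/28)))^4) ((d + Real.log (1-β)⁻¹)/b + 1))) with hL₀def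
  refine ⟨⌈Real.exp L₀⌉₊, ?_⟩
  intro n hn m t hm ht1 _ht2 Ωt _inst ℙ hprob G C hC hGC
  -- basic facts about L = log n
  set L : ℝ := Real.log n with hLdef
  have hnR : Real.exp L₀ ≤ (n:ℝ) := le_trans (Nat.le_ceil _) (Nat.cast_le.mpr hn)
  have hn0 : (0:ℝ) < n := lt_of_lt_of_le (Real.exp_pos _) hnR
  have hL0 : L₀ ≤ L := by
    have := Real.log_le_log (Real.exp_pos L₀) hnR
    rwa [Real.log_exp] at this
  have hL2 : 2 ≤ L := le_trans (le_trans (le_max_left _ _) (le_max_left _ _)) hL0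
  have hL1 : 1 ≤ L := by linarith
  have hLpos : 0 < L := by linarith
  have hLc : 1/c₁ + 1 ≤ L := le_trans (le_trans (le_max_right _ _) (le_max_left _ _)) hL0
  have hLe : (24 * Real.exp 5 / c₁ ^ ((13:ℝ)/14))^2 ≤ L :=
    le_trans (le_trans (le_max_left _ _) (le_max_right _ _)) hL0
  have hLb : (1/((1-β) * c₁ ^ ((1:ℝ)/28)))^4 ≤ L :=
    le_trans (le_trans (le_trans (le_max_left _ _) (le_max_right _ _)) (le_max_right _ _)) hL0
  have hLd : (d + Real.log (1-β)⁻¹)/b + 1 ≤ L :=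
    le_trans (le_trans (le_trans (le_max_right _ _) (le_max_right _ _)) (le_max_right _ _)) hL0
  -- facts about m
  set M : ℝ := (m:ℝ) with hMdef
  have hL7 : L ≤ L^7 := by
    calc L = L^1 := (pow_one L).symm
    _ ≤ L^7 := pow_le_pow_right₀ hL1 (by norm_num)
  have hcLm : c₁ * L ≤ M :=
    le_trans (mul_le_mul_of_nonneg_left hL7 hc₁.le) hm
  have hM1 : 1 ≤ M := by
    have h0 : c₁ * (1/c₁ + 1) ≤ c₁ * L := mul_le_mul_of_nonneg_left hLc hc₁.le
    have h1 : c₁ * (1/c₁ + 1) = 1 + c₁ := by field_simp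
    linarith
  have hM0 : (0:ℝ) < M := by linarith
  have hcL7pos : 0 < c₁ * L^7 := by positivity
  -- the summand
  set a : ℕ → ℝ := fun k => 3 * Real.exp 5 * (k:ℝ) ^ 3 / M with hadef
  set g : ℕ → ℝ := fun k => min ((a k)^t) 1 * β ^ k with hgdef
  have ha0 : ∀ k, 0 ≤ a k := fun k => by positivity
  have hmin0 : ∀ k, 0 ≤ min ((a k)^t) 1 := fun k => le_min (by positivity) zero_le_one
  have hg0 : ∀ k, 0 ≤ g k := fun k => mul_nonneg (hmin0 k) (by positivity)
  have hgle : ∀ k, g k ≤ β ^ k := fun k => by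
    have := min_le_right ((a k)^t) 1
    calc g k ≤ 1 * β ^ k := mul_le_mul_of_nonneg_right this (by positivity)
    _ = β ^ k := one_mul _
  have hβsum : Summable (fun k : ℕ => β ^ k) := summable_geometric_of_lt_one hβ0.le hβ1
  have hgsum : Summable g := Summable.of_nonneg_of_le hg0 hgle hβsum
  constructor
  · -- Part 1
    have key : ∀ k, ℙ ({ω | t ≤ G ω} ∩ {ω | C ω = k}) ≤ ENNReal.ofReal (g k) := by
      intro k
      have hCk : ℙ {ω | C ω = k} ≤ ENNReal.ofReal (β ^ k) := by
        refine le_trans (measure_mono ?_) (hC k)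
        intro ω hω; exact le_of_eq hω.symm
      rw [hgdef]
      simp only
      rw [ENNReal.ofReal_mul (hmin0 k)]
      rcases le_or_gt ((a k)^t) 1 with h | h
      · rw [min_eq_left h]
        refine le_trans (hGC k) ?_
        exact mul_le_mul' le_rfl hCk
      · rw [min_eq_right h.le, ENNReal.ofReal_one, one_mul]
        exact le_trans (measure_mono Set.inter_subset_right) hCk
    have hcover : {ω | t ≤ G ω} = ⋃ k, ({ω | t ≤ G ω} ∩ {ω | C ω = k}) := by
      ext ω
      simp only [Set.mem_iUnion, Set.mem_inter_iff, Set.mem_setOf_eq]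
      exact ⟨fun h => ⟨C ω, h, rfl⟩, fun ⟨k, h, _⟩ => h⟩
    calc ℙ {ω | t ≤ G ω} = ℙ (⋃ k, ({ω | t ≤ G ω} ∩ {ω | C ω = k})) := by rw [← hcover]
    _ ≤ ∑' k, ℙ ({ω | t ≤ G ω} ∩ {ω | C ω = k}) := measure_iUnion_le _
    _ ≤ ∑' k, ENNReal.ofReal (g k) := ENNReal.tsum_le_tsum key
    _ = ENNReal.ofReal (∑' k, g k) := (ENNReal.ofReal_tsum_of_nonneg hg0 hgsum).symm
  · -- Part 2
    set K : ℕ := ⌈L^2⌉₊ with hKdef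
    set N : ℕ := K + 1 with hNdef
    have hKle : (K:ℝ) ≤ 2 * L^2 := by
      have h1 := Nat.ceil_lt_add_one (a := L^2) (by positivity : (0:ℝ) ≤ L^2)
      have h2 : (1:ℝ) ≤ L^2 := one_le_pow₀ hL1
      linarith
    have hNge : L^2 ≤ (N:ℝ) := by
      push_cast [hNdef]
      linarith [Nat.le_ceil (L^2)]
    -- step A : m^{13/14} ≥ 24 e⁵ L⁶
    have hsqrt : 24 * Real.exp 5 / c₁ ^ ((13:ℝ)/14) ≤ L ^ ((1:ℝ)/2) := by
      have hx0 : (0:ℝ) ≤ 24 * Real.exp 5 / c₁ ^ ((13:ℝ)/14) := by positivity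
      have := Real.rpow_le_rpow (by positivity) hLe (le_of_lt (by norm_num : (0:ℝ) < 1/2))
      rwa [← Real.rpow_natCast (24 * Real.exp 5 / c₁ ^ ((13:ℝ)/14)) 2,
        ← Real.rpow_mul hx0, (by norm_num : ((2:ℕ):ℝ) * (1/2) = 1), Real.rpow_one] at this
    have hL132 : L ^ ((13:ℝ)/2) = L^6 * L ^ ((1:ℝ)/2) := by
      rw [← Real.rpow_natCast L 6, ← Real.rpow_add hLpos]
      norm_num
    have hM1314 : 24 * Real.exp 5 * L^6 ≤ M ^ ((13:ℝ)/14) := by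
      have h1 : (c₁ * L^7) ^ ((13:ℝ)/14) ≤ M ^ ((13:ℝ)/14) :=
        Real.rpow_le_rpow (le_of_lt hcL7pos) hm (by norm_num)
      have h2 : (c₁ * L^7) ^ ((13:ℝ)/14) = c₁ ^ ((13:ℝ)/14) * L ^ ((13:ℝ)/2) := by
        rw [Real.mul_rpow hc₁.le (by positivity), ← Real.rpow_natCast L 7,
          ← Real.rpow_mul hLpos.le]
        norm_num
      have h3 : 24 * Real.exp 5 * L^6 ≤ c₁ ^ ((13:ℝ)/14) * L ^ ((13:ℝ)/2) := by
        rw [hL132]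
        calc 24 * Real.exp 5 * L^6 ≤ c₁ ^ ((13:ℝ)/14) * L ^ ((1:ℝ)/2) * L^6 := by
              apply mul_le_mul_of_nonneg_right _ (by positivity)
              calc 24 * Real.exp 5 = c₁ ^ ((13:ℝ)/14) * (24 * Real.exp 5 / c₁ ^ ((13:ℝ)/14)) := by
                    field_simp
              _ ≤ c₁ ^ ((13:ℝ)/14) * L ^ ((1:ℝ)/2) :=
                    mul_le_mul_of_nonneg_left hsqrt hc14.le
        _ = c₁ ^ ((13:ℝ)/14) * (L^6 * L ^ ((1:ℝ)/2)) := by ring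
      exact le_trans h3 (h2 ▸ h1)
    have hak : ∀ k ≤ K, a k ≤ M ^ (-(1:ℝ)/14) := by
      intro k hk
      have hkK : (k:ℝ) ≤ (K:ℝ) := Nat.cast_le.mpr hk
      have hk3 : (k:ℝ)^3 ≤ 8 * L^6 := by
        calc (k:ℝ)^3 ≤ (2 * L^2)^3 :=
              pow_le_pow_left₀ (Nat.cast_nonneg k) (hkK.trans hKle) 3
        _ = 8 * L^6 := by ring
      have hnum : 3 * Real.exp 5 * (k:ℝ)^3 ≤ M ^ ((13:ℝ)/14) := by
        calc 3 * Real.exp 5 * (k:ℝ)^3 ≤ 3 * Real.exp 5 * (8 * L^6) :=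
              mul_le_mul_of_nonneg_left hk3 (by positivity)
        _ = 24 * Real.exp 5 * L^6 := by ring
        _ ≤ M ^ ((13:ℝ)/14) := hM1314
      calc a k = 3 * Real.exp 5 * (k:ℝ)^3 / M := rfl
      _ ≤ M ^ ((13:ℝ)/14) / M := by gcongr
      _ = M ^ (-(1:ℝ)/14) := by
          rw [show (-(1:ℝ)/14) = (13:ℝ)/14 - 1 by norm_num, Real.rpow_sub hM0, Real.rpow_one]
    -- convert to m^{-t/14}
    have hP : (M ^ (-(1:ℝ)/14)) ^ t = M ^ (-(t:ℝ)/14) := by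
      rw [← Real.rpow_natCast (M ^ (-(1:ℝ)/14)) t, ← Real.rpow_mul hM0.le]
      congr 1; ring
    -- head bound
    have hgeomsum : ∑ i ∈ Finset.range N, β ^ i ≤ (1-β)⁻¹ := by
      calc ∑ i ∈ Finset.range N, β ^ i ≤ ∑' i : ℕ, β ^ i :=
            Summable.sum_le_tsum _ (fun i _ => by positivity) hβsum
      _ = (1-β)⁻¹ := tsum_geometric_of_lt_one hβ0.le hβ1
    have hhead : ∑ i ∈ Finset.range N, g i ≤ M ^ (-(t:ℝ)/14) * (1-β)⁻¹ := by
      calc ∑ i ∈ Finset.range N, g i ≤ ∑ i ∈ Finset.range N, M ^ (-(t:ℝ)/14) * β ^ i := by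
            apply Finset.sum_le_sum
            intro i hi
            have hiK : i ≤ K := Nat.lt_succ_iff.mp (Finset.mem_range.mp hi)
            have h1 : min ((a i)^t) 1 ≤ M ^ (-(t:ℝ)/14) := by
              refine le_trans (min_le_left _ _) ?_
              rw [← hP]
              exact pow_le_pow_left₀ (ha0 i) (hak i hiK) t
            exact mul_le_mul_of_nonneg_right h1 (by positivity)
      _ = M ^ (-(t:ℝ)/14) * ∑ i ∈ Finset.range N, β ^ i := by rw [Finset.mul_sum]
      _ ≤ M ^ (-(t:ℝ)/14) * (1-β)⁻¹ :=
            mul_le_mul_of_nonneg_left hgeomsum (by positivity)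
    -- absorb (1-β)⁻¹ into m^{t/28}
    have hquarter : 1/((1-β) * c₁ ^ ((1:ℝ)/28)) ≤ L ^ ((1:ℝ)/4) := by
      have hx0 : (0:ℝ) ≤ 1/((1-β) * c₁ ^ ((1:ℝ)/28)) := by positivity
      have := Real.rpow_le_rpow (by positivity) hLb (le_of_lt (by norm_num : (0:ℝ) < 1/4))
      rwa [← Real.rpow_natCast (1/((1-β) * c₁ ^ ((1:ℝ)/28))) 4,
        ← Real.rpow_mul hx0, (by norm_num : ((4:ℕ):ℝ) * (1/4) = 1), Real.rpow_one] at this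
    have habsorb : (1-β)⁻¹ ≤ M ^ ((t:ℝ)/28) := by
      have h1 : M ^ ((1:ℝ)/28) ≤ M ^ ((t:ℝ)/28) := by
        apply Real.rpow_le_rpow_of_exponent_le hM1
        have : (1:ℝ) ≤ (t:ℝ) := by exact_mod_cast ht1
        linarith
      refine le_trans ?_ h1
      have h2 : (c₁ * L^7) ^ ((1:ℝ)/28) ≤ M ^ ((1:ℝ)/28) :=
        Real.rpow_le_rpow hcL7pos.le hm (by norm_num)
      refine le_trans ?_ h2
      have h3 : (c₁ * L^7) ^ ((1:ℝ)/28) = c₁ ^ ((1:ℝ)/28) * L ^ ((1:ℝ)/4) := by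
        rw [Real.mul_rpow hc₁.le (by positivity), ← Real.rpow_natCast L 7,
          ← Real.rpow_mul hLpos.le]
        norm_num
      rw [h3]
      have h4 := mul_le_mul_of_nonneg_left hquarter hc28.le
      calc (1-β)⁻¹ = c₁ ^ ((1:ℝ)/28) * (1/((1-β) * c₁ ^ ((1:ℝ)/28))) := by
            field_simp
      _ ≤ c₁ ^ ((1:ℝ)/28) * L ^ ((1:ℝ)/4) := h4
    have hheadfinal : ∑ i ∈ Finset.range N, g i ≤ M ^ (-(1/28 * (t:ℝ))) := by
      refine le_trans hhead ?_
      have : M ^ (-(t:ℝ)/14) * (1-β)⁻¹ ≤ M ^ (-(t:ℝ)/14) * M ^ ((t:ℝ)/28) :=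
        mul_le_mul_of_nonneg_left habsorb (by positivity)
      refine le_trans this (le_of_eq ?_)
      rw [← Real.rpow_add hM0]
      congr 1; ring
    -- tail bound
    have htail : ∑' i : ℕ, g (i + N) ≤ (n:ℝ) ^ (-d) := by
      have h1 : ∑' i : ℕ, g (i + N) ≤ ∑' i : ℕ, β ^ N * β ^ i := by
        apply Summable.tsum_le_tsum _ (hgsum.comp_injective (add_left_injective N))
          (by simpa using hβsum.mul_left (β ^ N))
        intro i
        calc g (i + N) ≤ β ^ (i + N) := hgle _
        _ = β ^ N * β ^ i := by rw [pow_add]; ring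
      have h2 : ∑' i : ℕ, β ^ N * β ^ i = β ^ N * (1-β)⁻¹ := by
        rw [tsum_mul_left, tsum_geometric_of_lt_one hβ0.le hβ1]
      have h3 : β ^ N * (1-β)⁻¹ ≤ (n:ℝ) ^ (-d) := by
        have hβN : (β:ℝ) ^ N ≤ β ^ (L^2) := by
          rw [← Real.rpow_natCast β N]
          exact Real.rpow_le_rpow_of_exponent_ge hβ0 hβ1.le hNge
        have hc0 : 0 ≤ Real.log (1-β)⁻¹ :=
          Real.log_nonneg ((one_le_inv₀ h1β).mpr (by linarith))
        have hbL : d + Real.log (1-β)⁻¹ + b ≤ b * L := by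
          have := mul_le_mul_of_nonneg_left hLd hbpos.le
          rw [mul_add, mul_div_cancel₀ _ (ne_of_gt hbpos)] at this
          linarith
        have hexp : Real.log β * L^2 + Real.log (1-β)⁻¹ ≤ Real.log n * (-d) := by
          have hbL2 : d * L + Real.log (1-β)⁻¹ ≤ b * L^2 := by
            have e1 : (d + Real.log (1-β)⁻¹ + b) * L ≤ b * L * L :=
              mul_le_mul_of_nonneg_right hbL hLpos.le
            have e2 : 0 ≤ Real.log (1-β)⁻¹ * (L - 1) := mul_nonneg hc0 (by linarith)
            have e3 : b * L * L = b * L^2 := by ring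
            have e4 : 0 ≤ b * L := mul_nonneg hbpos.le hLpos.le
            linarith [e1, e2, e3, e4]
          have : Real.log β * L^2 = -(b * L^2) := by rw [hbdef]; ring
          rw [this]
          have : Real.log n * (-d) = -(d * L) := by rw [← hLdef]; ring
          rw [this]
          linarith
        calc β ^ N * (1-β)⁻¹ ≤ β ^ (L^2) * (1-β)⁻¹ :=
              mul_le_mul_of_nonneg_right hβN (by positivity)
        _ = Real.exp (Real.log β * L^2 + Real.log (1-β)⁻¹) := by
              rw [Real.rpow_def_of_pos hβ0, Real.exp_add, Real.exp_log (by positivity)]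
        _ ≤ Real.exp (Real.log n * (-d)) := Real.exp_le_exp.mpr hexp
        _ = (n:ℝ) ^ (-d) := (Real.rpow_def_of_pos hn0 _).symm
      exact h1.trans (h2 ▸ h3)
    -- combine
    have hsplit := Summable.sum_add_tsum_nat_add (f := g) N hgsum
    calc ∑' k, g k = ∑ i ∈ Finset.range N, g i + ∑' i : ℕ, g (i + N) := hsplit.symm
    _ ≤ M ^ (-(1/28 * (t:ℝ))) + (n:ℝ) ^ (-d) := add_le_add hheadfinal htail
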